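/- The kernel of the surjective ℚ-algebra homomorphism i* : R_Q → R_Fl (given by ρ ↦ ξ, b₁ ↦ −3h, b₂ ↦ 3h², d₂ ↦ 3h²) is the ideal of R_Q generated by the classes of b₂−d₂, b₁²−3d₂, d₂−b₁ρ+3ρ², b₁b₂ and d₂². Equivalently, the induced map ℚ[ρ,b₁,b₂,d₂]/(I_Q + ⟨b₂−d₂, b₁²−3d₂, d₂−b₁ρ+3ρ², b₁b₂, d₂²⟩) → R_Fl is a ℚ-algebra isomorphism. -/

import Mathlib

open MvPolynomial

noncomputable section

/-- Variables of ℚ[ρ,b₁,b₂,d₂]: `X 0 = ρ`, `X 1 = b₁`, `X 2 = b₂`, `X 3 = d₂`. -/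
abbrev PQ := MvPolynomial (Fin 4) ℚ

/-- The ideal I_Q presenting the Chow ring of Q = ℙ(U). -/
def IQ : Ideal PQ := Ideal.span
  { X 1 ^ 2 * X 3 - 3 * X 3 ^ 2,
    X 1 ^ 2 * X 2 - X 2 * X 3 - 3 * X 3 ^ 2,
    X 1 ^ 4 + 3 * X 2 ^ 2 - 9 * X 2 * X 3 - 3 * X 3 ^ 2,
    2 * X 1 * X 2 * X 3 - 3 * X 1 * X 3 ^ 2,
    3 * X 1 * X 2 ^ 2 - 7 * X 1 * X 3 ^ 2,
    X 0 ^ 12 + 3 * X 0 ^ 11 * X 1 + 3 * X 0 ^ 10 * (X 1 ^ 2 + 2 * X 2 - X 3)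
      + X 0 ^ 9 * (-X 1 ^ 3 + 12 * X 1 * X 2 + 2 * X 1 * X 3)
      + 3 * X 0 ^ 8 * (9 * X 2 ^ 2 - 16 * X 2 * X 3 + 17 * X 3 ^ 2)
      + 28 * X 0 ^ 7 * X 1 * X 3 ^ 2 + 56 * X 0 ^ 6 * X 3 ^ 3 }

/-- The Chow ring R_Q of Q. -/
abbrev RQ := PQ ⧸ IQ

/-- Variables of ℚ[h,ξ]: `X 0 = h`, `X 1 = ξ`.  The ideal ⟨h³, h²+hξ+ξ²⟩. -/
def JFl : Ideal (MvPolynomial (Fin 2) ℚ) :=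
  Ideal.span {X 0 ^ 3, X 0 ^ 2 + X 0 * X 1 + X 1 ^ 2}

/-- The Chow ring of the full flag variety Fl(V). -/
abbrev RFl := MvPolynomial (Fin 2) ℚ ⧸ JFl

/-- The homomorphism ℚ[ρ,b₁,b₂,d₂] → R_Fl given by ρ ↦ ξ, b₁ ↦ −3h, b₂ ↦ 3h², d₂ ↦ 3h². -/
def φ : PQ →ₐ[ℚ] RFl :=
  aeval fun i => Ideal.Quotient.mk JFl
    (![X 1, -3 * X 0, 3 * X 0 ^ 2, 3 * X 0 ^ 2] i)

/-- The extra kernel generators b₂−d₂, b₁²−3d₂, d₂−b₁ρ+3ρ², b₁b₂, d₂². -/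
def K : Set PQ :=
  { X 2 - X 3, X 1 ^ 2 - 3 * X 3, X 3 - X 1 * X 0 + 3 * X 0 ^ 2, X 1 * X 2, X 3 ^ 2 }

/-! ### Auxiliary material -/

/-- The combined ideal. -/
abbrev IK : Ideal PQ := IQ ⊔ Ideal.span K

lemma mem_JFl' (A B p : MvPolynomial (Fin 2) ℚ)
    (hp : p = A * X 0 ^ 3 + B * (X 0 ^ 2 + X 0 * X 1 + X 1 ^ 2)) : p ∈ JFl := by
  rw [hp]
  exact add_mem (Ideal.mul_mem_left _ _ (Ideal.subset_span (Set.mem_insert _ _)))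
    (Ideal.mul_mem_left _ _ (Ideal.subset_span (Set.mem_insert_of_mem _ rfl)))

lemma mem_spanK (c1 c2 c3 c4 c5 p : PQ)
    (hp : p = c1 * (X 2 - X 3) + c2 * (X 1 ^ 2 - 3 * X 3)
      + c3 * (X 3 - X 1 * X 0 + 3 * X 0 ^ 2) + c4 * (X 1 * X 2) + c5 * (X 3 ^ 2)) :
    p ∈ Ideal.span K := by
  rw [hp]
  refine add_mem (add_mem (add_mem (add_mem ?_ ?_) ?_) ?_) ?_ <;>
    refine Ideal.mul_mem_left _ _ (Ideal.subset_span ?_)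
  · exact Set.mem_insert _ _
  · exact Set.mem_insert_of_mem _ (Set.mem_insert _ _)
  · exact Set.mem_insert_of_mem _ (Set.mem_insert_of_mem _ (Set.mem_insert _ _))
  · exact Set.mem_insert_of_mem _ (Set.mem_insert_of_mem _ (Set.mem_insert_of_mem _
      (Set.mem_insert _ _)))
  · exact Set.mem_insert_of_mem _ (Set.mem_insert_of_mem _ (Set.mem_insert_of_mem _
      (Set.mem_insert_of_mem _ rfl)))

lemma phi_apply (p : PQ) :
    φ p = Ideal.Quotient.mk JFl
      (aeval ![(X 1 : MvPolynomial (Fin 2) ℚ), -3 * X 0, 3 * X 0 ^ 2, 3 * X 0 ^ 2] p) := by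
  have h : φ = (Ideal.Quotient.mkₐ ℚ JFl).comp
      (aeval ![(X 1 : MvPolynomial (Fin 2) ℚ), -3 * X 0, 3 * X 0 ^ 2, 3 * X 0 ^ 2]) := by
    apply MvPolynomial.algHom_ext
    intro i
    fin_cases i <;> simp [φ]
  rw [h]; rfl

lemma IK_le_ker : ∀ p ∈ IK, φ p = 0 := by
  have hI : IQ ≤ RingHom.ker (φ : PQ →+* RFl) := by
    rw [IQ, Ideal.span_le]
    rintro p hp
    simp only [Set.mem_insert_iff, Set.mem_singleton_iff] at hp
    simp only [SetLike.mem_coe, RingHom.mem_ker]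
    rcases hp with rfl | rfl | rfl | rfl | rfl | rfl 
    all_goals show φ _ = 0
    all_goals rw [phi_apply, Ideal.Quotient.eq_zero_iff_mem]
    · refine mem_JFl' 0 0 _ ?_
      simp only [map_sub, map_add, map_mul, map_pow, map_neg, map_ofNat, aeval_X,
        Matrix.cons_val_zero, Matrix.cons_val_one, Matrix.head_cons, Matrix.cons_val_two,
        Matrix.tail_cons, Matrix.cons_val_three, Matrix.head_fin_const]
      ring
    · refine mem_JFl' (-9 * X 0) 0 _ ?_
      simp only [map_sub, map_add, map_mul, map_pow, map_neg, map_ofNat, aeval_X,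
        Matrix.cons_val_zero, Matrix.cons_val_one, Matrix.head_cons, Matrix.cons_val_two,
        Matrix.tail_cons, Matrix.cons_val_three, Matrix.head_fin_const]
      ring
    · refine mem_JFl' 0 0 _ ?_
      simp only [map_sub, map_add, map_mul, map_pow, map_neg, map_ofNat, aeval_X,
        Matrix.cons_val_zero, Matrix.cons_val_one, Matrix.head_cons, Matrix.cons_val_two,
        Matrix.tail_cons, Matrix.cons_val_three, Matrix.head_fin_const]
      ring
    · refine mem_JFl' (27 * X 0 ^ 2) 0 _ ?_
      simp only [map_sub, map_add, map_mul, map_pow, map_neg, map_ofNat, aeval_X,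
        Matrix.cons_val_zero, Matrix.cons_val_one, Matrix.head_cons, Matrix.cons_val_two,
        Matrix.tail_cons, Matrix.cons_val_three, Matrix.head_fin_const]
      ring
    · refine mem_JFl' (108 * X 0 ^ 2) 0 _ ?_
      simp only [map_sub, map_add, map_mul, map_pow, map_neg, map_ofNat, aeval_X,
        Matrix.cons_val_zero, Matrix.cons_val_one, Matrix.head_cons, Matrix.cons_val_two,
        Matrix.tail_cons, Matrix.cons_val_three, Matrix.head_fin_const]
      ring
    · refine mem_JFl'
        (1153 * X 0 ^ 9 - 981 * X 0 ^ 8 * X 1)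
        (X 1 ^ 10 - 10 * X 0 * X 1 ^ 9 + 45 * X 0 ^ 2 * X 1 ^ 8 - 134 * X 0 ^ 3 * X 1 ^ 7
          + 359 * X 0 ^ 4 * X 1 ^ 6 - 981 * X 0 ^ 5 * X 1 ^ 5 + 2134 * X 0 ^ 6 * X 1 ^ 4
          - 1153 * X 0 ^ 7 * X 1 ^ 3 - 981 * X 0 ^ 8 * X 1 ^ 2 + 2134 * X 0 ^ 9 * X 1
          - 1153 * X 0 ^ 10) _ ?_
      simp only [map_sub, map_add, map_mul, map_pow, map_neg, map_ofNat, aeval_X,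
        Matrix.cons_val_zero, Matrix.cons_val_one, Matrix.head_cons, Matrix.cons_val_two,
        Matrix.tail_cons, Matrix.cons_val_three, Matrix.head_fin_const]
      ring
  have hK : Ideal.span K ≤ RingHom.ker (φ : PQ →+* RFl) := by
    rw [Ideal.span_le]
    rintro p hp
    simp only [K, Set.mem_insert_iff, Set.mem_singleton_iff] at hp
    simp only [SetLike.mem_coe, RingHom.mem_ker]
    rcases hp with rfl | rfl | rfl | rfl | rfl 
    all_goals show φ _ = 0
    all_goals rw [phi_apply, Ideal.Quotient.eq_zero_iff_mem]
    · refine mem_JFl' 0 0 _ ?_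
      simp only [map_sub, map_add, map_mul, map_pow, map_neg, map_ofNat, aeval_X,
        Matrix.cons_val_zero, Matrix.cons_val_one, Matrix.head_cons, Matrix.cons_val_two,
        Matrix.tail_cons, Matrix.cons_val_three, Matrix.head_fin_const]
      ring
    · refine mem_JFl' 0 0 _ ?_
      simp only [map_sub, map_add, map_mul, map_pow, map_neg, map_ofNat, aeval_X,
        Matrix.cons_val_zero, Matrix.cons_val_one, Matrix.head_cons, Matrix.cons_val_two,
        Matrix.tail_cons, Matrix.cons_val_three, Matrix.head_fin_const]
      ring
    · refine mem_JFl' 0 3 _ ?_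
      simp only [map_sub, map_add, map_mul, map_pow, map_neg, map_ofNat, aeval_X,
        Matrix.cons_val_zero, Matrix.cons_val_one, Matrix.head_cons, Matrix.cons_val_two,
        Matrix.tail_cons, Matrix.cons_val_three, Matrix.head_fin_const]
      ring
    · refine mem_JFl' (-9) 0 _ ?_
      simp only [map_sub, map_add, map_mul, map_pow, map_neg, map_ofNat, aeval_X,
        Matrix.cons_val_zero, Matrix.cons_val_one, Matrix.head_cons, Matrix.cons_val_two,
        Matrix.tail_cons, Matrix.cons_val_three, Matrix.head_fin_const]
      ring
    · refine mem_JFl' (9 * X 0) 0 _ ?_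
      simp only [map_sub, map_add, map_mul, map_pow, map_neg, map_ofNat, aeval_X,
        Matrix.cons_val_zero, Matrix.cons_val_one, Matrix.head_cons, Matrix.cons_val_two,
        Matrix.tail_cons, Matrix.cons_val_three, Matrix.head_fin_const]
      ring
  intro p hp
  exact (sup_le hI hK) hp

/-- The induced map on the quotient. -/
def φbar : (PQ ⧸ IK) →ₐ[ℚ] RFl := Ideal.Quotient.liftₐ IK φ IK_le_ker

lemma φbar_mk (p : PQ) : φbar (Ideal.Quotient.mk IK p) = φ p := by
  rfl

/-- An algebraic section candidate: h ↦ −b₁/3, ξ ↦ ρ. -/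
def σ' : MvPolynomial (Fin 2) ℚ →ₐ[ℚ] (PQ ⧸ IK) :=
  aeval ![Ideal.Quotient.mk IK (C (-1/3 : ℚ) * X 1), Ideal.Quotient.mk IK (X 0)]

lemma hC4 : (3 : PQ) * C (-1/3 : ℚ) = -1 := by
  rw [show (3 : PQ) = C (3 : ℚ) from (map_ofNat C 3).symm, ← map_mul]
  norm_num

lemma hC2 : (3 : MvPolynomial (Fin 2) ℚ) * C (-1/3 : ℚ) = -1 := by
  rw [show (3 : MvPolynomial (Fin 2) ℚ) = C (3 : ℚ) from (map_ofNat C 3).symm, ← map_mul]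
  norm_num

lemma JFl_le_ker' : JFl ≤ RingHom.ker (σ' : MvPolynomial (Fin 2) ℚ →+* PQ ⧸ IK) := by
  rw [JFl, Ideal.span_le]
  rintro p hp
  simp only [Set.mem_insert_iff, Set.mem_singleton_iff] at hp
  simp only [SetLike.mem_coe, RingHom.mem_ker]
  rcases hp with rfl | rfl
  all_goals show σ' _ = 0
  · have : σ' (X 0 ^ 3 : MvPolynomial (Fin 2) ℚ)
        = Ideal.Quotient.mk IK ((C (-1/3 : ℚ) * X 1) ^ 3) := by
      simp [σ']
    rw [this, Ideal.Quotient.eq_zero_iff_mem]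
    refine le_sup_right (a := IQ) (mem_spanK (-3 * (C (-1/3 : ℚ)) ^ 3 * X 1)
      ((C (-1/3 : ℚ)) ^ 3 * X 1) 0 (3 * (C (-1/3 : ℚ)) ^ 3) 0 _ ?_)
    ring
  · have : σ' (X 0 ^ 2 + X 0 * X 1 + X 1 ^ 2 : MvPolynomial (Fin 2) ℚ)
        = Ideal.Quotient.mk IK ((C (-1/3 : ℚ) * X 1) ^ 2 + (C (-1/3 : ℚ) * X 1) * X 0
            + X 0 ^ 2) := by
      simp [σ']
    rw [this, Ideal.Quotient.eq_zero_iff_mem]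
    refine le_sup_right (a := IQ) (mem_spanK 0 ((C (-1/3 : ℚ)) ^ 2) (-(C (-1/3 : ℚ))) 0 0 _ ?_)
    linear_combination (C (-1/3 : ℚ) * X 3 + X 0 ^ 2) * hC4

/-- The inverse map. -/
def σbar : RFl →ₐ[ℚ] (PQ ⧸ IK) :=
  Ideal.Quotient.liftₐ JFl σ' (fun _ hp => JFl_le_ker' hp)

lemma σbar_mk (p : MvPolynomial (Fin 2) ℚ) :
    σbar (Ideal.Quotient.mk JFl p) = σ' p := by
  rfl

lemma σbar_φ : σbar.comp φbar = AlgHom.id ℚ (PQ ⧸ IK) := by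
  apply Ideal.Quotient.algHom_ext
  apply MvPolynomial.algHom_ext
  intro i
  fin_cases i
  · show σbar (φbar (Ideal.Quotient.mk IK (X 0))) = Ideal.Quotient.mk IK (X 0)
    rw [φbar_mk]
    have h1 : φ (X 0 : PQ) = Ideal.Quotient.mk JFl (X 1) := by rw [phi_apply]; simp
    rw [h1, σbar_mk]
    simp [σ']
  · show σbar (φbar (Ideal.Quotient.mk IK (X 1))) = Ideal.Quotient.mk IK (X 1)
    rw [φbar_mk]
    have h1 : φ (X 1 : PQ) = Ideal.Quotient.mk JFl (-3 * X 0) := by rw [phi_apply]; simp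
    have h2 : σ' (-3 * X 0 : MvPolynomial (Fin 2) ℚ)
        = Ideal.Quotient.mk IK (-3 * (C (-1/3 : ℚ) * X 1)) := by
      simp [σ', map_ofNat]
    rw [h1, σbar_mk, h2]
    congr 1
    linear_combination (-(X 1) : PQ) * hC4
  · show σbar (φbar (Ideal.Quotient.mk IK (X 2))) = Ideal.Quotient.mk IK (X 2)
    rw [φbar_mk]
    have h1 : φ (X 2 : PQ) = Ideal.Quotient.mk JFl (3 * X 0 ^ 2) := by rw [phi_apply]; simp
    have h2 : σ' (3 * X 0 ^ 2 : MvPolynomial (Fin 2) ℚ)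
        = Ideal.Quotient.mk IK (3 * (C (-1/3 : ℚ) * X 1) ^ 2) := by
      simp [σ', map_ofNat]
    rw [h1, σbar_mk, h2, Ideal.Quotient.eq]
    refine le_sup_right (a := IQ) (mem_spanK (-1) (3 * (C (-1/3 : ℚ)) ^ 2) 0 0 0 _ ?_)
    linear_combination (X 3 * (3 * C (-1/3 : ℚ) - 1)) * hC4
  · show σbar (φbar (Ideal.Quotient.mk IK (X 3))) = Ideal.Quotient.mk IK (X 3)
    rw [φbar_mk]
    have h1 : φ (X 3 : PQ) = Ideal.Quotient.mk JFl (3 * X 0 ^ 2) := by rw [phi_apply]; simp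
    have h2 : σ' (3 * X 0 ^ 2 : MvPolynomial (Fin 2) ℚ)
        = Ideal.Quotient.mk IK (3 * (C (-1/3 : ℚ) * X 1) ^ 2) := by
      simp [σ', map_ofNat]
    rw [h1, σbar_mk, h2, Ideal.Quotient.eq]
    refine le_sup_right (a := IQ) (mem_spanK 0 (3 * (C (-1/3 : ℚ)) ^ 2) 0 0 0 _ ?_)
    linear_combination (X 3 * (3 * C (-1/3 : ℚ) - 1)) * hC4

lemma φ_σbar : φbar.comp σbar = AlgHom.id ℚ RFl := by
  apply Ideal.Quotient.algHom_ext
  apply MvPolynomial.algHom_ext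
  intro i
  fin_cases i
  · show φbar (σbar (Ideal.Quotient.mk JFl (X 0))) = Ideal.Quotient.mk JFl (X 0)
    rw [σbar_mk]
    have h2 : σ' (X 0 : MvPolynomial (Fin 2) ℚ)
        = Ideal.Quotient.mk IK (C (-1/3 : ℚ) * X 1) := by simp [σ']
    rw [h2, φbar_mk]
    have h1 : φ (C (-1/3 : ℚ) * X 1)
        = Ideal.Quotient.mk JFl (C (-1/3 : ℚ) * (-3 * X 0)) := by
      rw [phi_apply]
      simp [algebraMap_eq]
    rw [h1]
    congr 1
    linear_combination (-(X 0) : MvPolynomial (Fin 2) ℚ) * hC2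
  · show φbar (σbar (Ideal.Quotient.mk JFl (X 1))) = Ideal.Quotient.mk JFl (X 1)
    rw [σbar_mk]
    have h2 : σ' (X 1 : MvPolynomial (Fin 2) ℚ) = Ideal.Quotient.mk IK (X 0) := by simp [σ']
    rw [h2, φbar_mk, phi_apply]
    simp

/-- The kernel of the induced map i* : R_Q → R_Fl is the ideal of R_Q generated by the
classes of b₂−d₂, b₁²−3d₂, d₂−b₁ρ+3ρ², b₁b₂, d₂²; equivalently, the induced map
ℚ[ρ,b₁,b₂,d₂]/(I_Q + ⟨those five⟩) → R_Fl is a ℚ-algebra isomorphism. -/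
theorem kernel_of_restriction :
    (∀ ψ : RQ →ₐ[ℚ] RFl, (∀ p : PQ, ψ (Ideal.Quotient.mk IQ p) = φ p) →
      RingHom.ker ψ = Ideal.span (Ideal.Quotient.mk IQ '' K)) ∧
    ∃ e : (PQ ⧸ (IQ ⊔ Ideal.span K)) ≃ₐ[ℚ] RFl,
      ∀ p : PQ, e (Ideal.Quotient.mk (IQ ⊔ Ideal.span K) p) = φ p := by
  have hker : ∀ p : PQ, φ p = 0 ↔ p ∈ IK := by
    intro p
    constructor
    · intro hp
      have h1 : σbar (φbar (Ideal.Quotient.mk IK p)) = Ideal.Quotient.mk IK p := by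
        have := DFunLike.congr_fun σbar_φ (Ideal.Quotient.mk IK p)
        simpa using this
      rw [φbar_mk, hp, map_zero] at h1
      rw [← Ideal.Quotient.eq_zero_iff_mem, ← h1]
    · exact fun hp => IK_le_ker p hp
  constructor
  · intro ψ hψ
    ext x
    obtain ⟨p, rfl⟩ := Ideal.Quotient.mk_surjective x
    rw [RingHom.mem_ker, hψ p,
      show Ideal.span (Ideal.Quotient.mk IQ '' K)
        = Ideal.map (Ideal.Quotient.mk IQ) (Ideal.span K) from (Ideal.map_span _ _).symm,
      Ideal.mem_quotient_iff_mem_sup, hker p]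
    rw [sup_comm]
  · refine ⟨AlgEquiv.ofAlgHom φbar σbar φ_σbar σbar_φ, fun p => ?_⟩
    exact φbar_mk p
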